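/- Gap monotonicity of MMOO moment-generating function: Let S(s,t) = P · Σ_{k=s}^{t-1} X_k where (X_k) is a stationary two-state Markov chain with p_{01} + p_{10} < 1 and P > 0. Then for every θ ∈ ℝ and every strictly increasing sequence τ_1 < … < τ_n of integers, E[ e^{θ P Σ_{i=1}^n X_{τ_i}} ] ≤ E[ e^{θ S(0,n)} ]; i.e., the MGF evaluated over any n time slots is maximized when the slots are consecutive. -/

import Mathlib

open MeasureTheory

namespace MMOO17

/-- stationary vector of the two-state chain -/
def pv (p : ℝ) : Bool → ℝ := fun b => if b then p else 1 - p

/-- `k`-step transition matrix of the two-state chain, in spectral form -/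
def qp (p l : ℝ) (k : ℕ) (i j : Bool) : ℝ :=
  pv p j + l ^ k * ((if i = j then 1 else 0) - pv p j)

/-- per-slot multiplicative weight -/
def gg (d : ℝ) : Bool → ℝ := fun b => if b then d else 1

/-- backward value vector over a list of gaps, with terminal vector `v` -/
def Wl (p l d : ℝ) : List ℕ → (Bool → ℝ) → Bool → ℝ
  | [], v => v
  | a :: t, v => fun i => gg d i * ∑ j : Bool, qp p l a i j * Wl p l d t v j

/-- generic forward fold of an inhomogeneous chain -/
def vfold (w0 : Bool → ℝ) (ws : ℕ → Bool → Bool → ℝ) : ℕ → Bool → ℝ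
  | 0 => w0
  | t + 1 => fun j => ∑ i : Bool, vfold w0 ws t i * ws t i j

def slots (τ : ℕ → ℕ) (n : ℕ) : Finset ℕ := (Finset.range n).image τ

def w0v (p d : ℝ) (τ : ℕ → ℕ) (n : ℕ) : Bool → ℝ :=
  fun j => pv p j * (if 0 ∈ slots τ n then gg d j else 1)

def wsv (p l d : ℝ) (τ : ℕ → ℕ) (n : ℕ) : ℕ → Bool → Bool → ℝ :=
  fun k i j => qp p l 1 i j * (if k + 1 ∈ slots τ n then gg d j else 1)

/-- list of gaps between consecutive slots -/
def glist (τ : ℕ → ℕ) : ℕ → List ℕ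
  | 0 => []
  | m + 1 => glist τ m ++ [τ (m + 1) - τ m]

/-- forward value vector along the slots -/
def ffwd (p l d : ℝ) (τ : ℕ → ℕ) : ℕ → Bool → ℝ
  | 0 => fun j => pv p j * gg d j
  | m + 1 => fun j =>
      (∑ i : Bool, ffwd p l d τ m i * qp p l (τ (m + 1) - τ m) i j) * gg d j

lemma chapman (p l : ℝ) (a b : ℕ) (i j : Bool) :
    ∑ k : Bool, qp p l a i k * qp p l b k j = qp p l (a + b) i j := by
  cases i <;> cases j <;> simp [qp, pv, Fintype.sum_bool, pow_add] <;> ring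

lemma stationary (p l : ℝ) (k : ℕ) (j : Bool) :
    ∑ i : Bool, pv p i * qp p l k i j = pv p j := by
  cases j <;> simp [qp, pv, Fintype.sum_bool] <;> ring

lemma sum_qp_zero (p l : ℝ) (v : Bool → ℝ) (j : Bool) :
    ∑ i : Bool, v i * qp p l 0 i j = v j := by
  cases j <;> simp [Fintype.sum_bool, qp, pv] <;> ring

lemma Wl_cons (p l d : ℝ) (a : ℕ) (t : List ℕ) (v : Bool → ℝ) (i : Bool) :
    Wl p l d (a :: t) v i = gg d i * ∑ j : Bool, qp p l a i j * Wl p l d t v j := rfl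

lemma Wl_append (p l d : ℝ) (L : List ℕ) (a : ℕ) (v : Bool → ℝ) :
    Wl p l d (L ++ [a]) v
      = Wl p l d L (fun x => gg d x * ∑ j : Bool, qp p l a x j * v j) := by
  induction L with
  | nil => rfl
  | cons b t ih => funext i; simp [Wl_cons, ih]

section inv
variable {p l d : ℝ} (hp0 : 0 ≤ p) (hp1 : p ≤ 1) (hl0 : 0 ≤ l) (hl1 : l ≤ 1) (hd : 0 < d)

include hp0 hp1 hl0 hl1 in
lemma qp_nonneg (k : ℕ) (i j : Bool) : 0 ≤ qp p l k i j := by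
  have h0 : 0 ≤ l ^ k := pow_nonneg hl0 k
  have h1 : l ^ k ≤ 1 := pow_le_one₀ hl0 hl1
  cases i <;> cases j <;> simp [qp, pv] <;> nlinarith

include hp0 hp1 hl0 hl1 hd in
lemma Wl_gg_nonneg : ∀ (L : List ℕ) (i : Bool), 0 ≤ Wl p l d L (gg d) i := by
  intro L
  induction L with
  | nil => intro i; cases i <;> simp [Wl, gg] <;> positivity
  | cons a t ih =>
    intro i
    have hg : 0 ≤ gg d i := by cases i <;> simp [gg] <;> positivity
    refine mul_nonneg hg (Finset.sum_nonneg fun j _ => ?_)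
    exact mul_nonneg (qp_nonneg hp0 hp1 hl0 hl1 a i j) (ih j)

include hp0 hp1 hl0 hl1 hd in
lemma Wl_gg_diff : ∀ L : List ℕ, ∃ c : ℝ, 0 ≤ c ∧
    Wl p l d L (gg d) true - Wl p l d L (gg d) false = (d - 1) * c := by
  intro L
  induction L with
  | nil => exact ⟨1, zero_le_one, by simp [Wl, gg]⟩
  | cons a t ih =>
    obtain ⟨c, hc0, hc⟩ := ih
    set v := Wl p l d t (gg d) with hv
    have hv0 : 0 ≤ v false := Wl_gg_nonneg hp0 hp1 hl0 hl1 hd t false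
    have hv1 : 0 ≤ v true := Wl_gg_nonneg hp0 hp1 hl0 hl1 hd t true
    set x := l ^ a with hx
    have hx0 : 0 ≤ x := pow_nonneg hl0 a
    have hx1 : x ≤ 1 := pow_le_one₀ hl0 hl1
    set m := (1 - p) * v false + p * v true with hm
    have hm0 : 0 ≤ m := by nlinarith
    refine ⟨m * (1 - x) + x * (d * c + v false), by nlinarith, ?_⟩
    have hst : ∀ i : Bool, ∑ j : Bool, qp p l a i j * v j = m + x * (v i - m) := by
      intro i; cases i <;> simp [qp, pv, Fintype.sum_bool, hm, hx] <;> ring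
    have e1 : Wl p l d (a :: t) (gg d) true = d * (m + x * (v true - m)) := by
      rw [Wl_cons, hst true]; simp [gg]
    have e0 : Wl p l d (a :: t) (gg d) false = (m + x * (v false - m)) := by
      rw [Wl_cons, hst false]; simp [gg]
    rw [e1, e0]
    have hvv : v true = v false + (d - 1) * c := by linarith [hc]
    rw [hvv]; ring

include hp0 hp1 hl0 hl1 hd in
lemma Wl_mono : ∀ L : List ℕ, (∀ a ∈ L, 1 ≤ a) → ∀ u : Bool → ℝ,
    0 ≤ u false → 0 ≤ u true →
    (∃ e : ℝ, 0 ≤ e ∧ (1 - p) * d * u true - p * u false = (d - 1) * e) →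
    ∑ i : Bool, u i * Wl p l d L (gg d) i
      ≤ ∑ i : Bool, u i * Wl p l d (List.replicate L.length 1) (gg d) i := by
  intro L
  induction L with
  | nil => intro _ u _ _ _; simp
  | cons a t ih =>
    intro hge u hu0 hu1 hC
    obtain ⟨e, he0, he⟩ := hC
    have ha : 1 ≤ a := hge a (by simp)
    have hge' : ∀ b ∈ t, 1 ≤ b := fun b hb => hge b (by simp [hb])
    set v := Wl p l d t (gg d) with hv
    have hv0 : 0 ≤ v false := Wl_gg_nonneg hp0 hp1 hl0 hl1 hd t false
    have hv1 : 0 ≤ v true := Wl_gg_nonneg hp0 hp1 hl0 hl1 hd t true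
    obtain ⟨c, hc0, hc⟩ := Wl_gg_diff hp0 hp1 hl0 hl1 hd t
    set m := (1 - p) * v false + p * v true with hm
    have hst : ∀ (k : ℕ) (i : Bool),
        ∑ j : Bool, qp p l k i j * v j = m + l ^ k * (v i - m) := by
      intro k i; cases i <;> simp [qp, pv, Fintype.sum_bool, hm] <;> ring
    have hxa : l ^ a ≤ l ^ 1 := pow_le_pow_of_le_one hl0 hl1 ha
    have hW : ∀ (k : ℕ) (i : Bool), Wl p l d (k :: t) (gg d) i
        = gg d i * (m + l ^ k * (v i - m)) := by
      intro k i; rw [Wl_cons, hst]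
    have hsum : ∀ k : ℕ, ∑ i : Bool, u i * Wl p l d (k :: t) (gg d) i
        = u false * (m + l ^ k * (v false - m)) + u true * (d * (m + l ^ k * (v true - m))) := by
      intro k
      simp only [Fintype.sum_bool, hW, gg]
      simp only [if_true, Bool.false_eq_true, reduceIte]
      ring
    have key : u false * (v false - m) + u true * (d * (v true - m))
        = (d - 1) ^ 2 * (c * e) := by
      have h1 : v false - m = -p * (v true - v false) := by rw [hm]; ring
      have h2 : v true - m = (1 - p) * (v true - v false) := by rw [hm]; ring
      have hc' : v true - v false = (d - 1) * c := hc
      rw [h1, h2, hc']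
      linear_combination ((d - 1) * c) * he
    have step1 : ∑ i : Bool, u i * Wl p l d (a :: t) (gg d) i
        ≤ ∑ i : Bool, u i * Wl p l d (1 :: t) (gg d) i := by
      have hdiff : ∑ i : Bool, u i * Wl p l d (a :: t) (gg d) i
          - ∑ i : Bool, u i * Wl p l d (1 :: t) (gg d) i
          = (l ^ a - l ^ 1) * ((d - 1) ^ 2 * (c * e)) := by
        rw [hsum a, hsum 1, ← key]; ring
      have hnp : (l ^ a - l ^ 1) * ((d - 1) ^ 2 * (c * e)) ≤ 0 :=
        mul_nonpos_of_nonpos_of_nonneg (by linarith)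
          (mul_nonneg (sq_nonneg _) (mul_nonneg hc0 he0))
      linarith
    have q00 : qp p l 1 false false = (1 - p) + l * p := by simp [qp, pv]; try ring
    have q01 : qp p l 1 false true = p - l * p := by simp [qp, pv]; try ring
    have q10 : qp p l 1 true false = (1 - p) - l * (1 - p) := by simp [qp, pv]; try ring
    have q11 : qp p l 1 true true = p + l * (1 - p) := by simp [qp, pv]; try ring
    set uF : ℝ := u false * ((1 - p) + l * p) + u true * d * ((1 - p) - l * (1 - p)) with huF
    set uT : ℝ := u false * (p - l * p) + u true * d * (p + l * (1 - p)) with huT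
    set u' : Bool → ℝ := fun j => if j then uT else uF with hu'
    have hu'f : u' false = uF := rfl
    have hu't : u' true = uT := rfl
    have step2 : ∀ t' : List ℕ, ∑ i : Bool, u i * Wl p l d (1 :: t') (gg d) i
        = ∑ j : Bool, u' j * Wl p l d t' (gg d) j := by
      intro t'
      simp only [Fintype.sum_bool, Wl_cons, hu'f, hu't, huF, huT, q00, q01, q10, q11, gg,
        if_true, Bool.false_eq_true, reduceIte]
      ring
    have h1p : (0:ℝ) ≤ 1 - p := by linarith
    have h1l : (0:ℝ) ≤ 1 - l := by linarith
    have hu'0 : 0 ≤ u' false := by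
      rw [hu'f, huF]
      have h1 : 0 ≤ u false * (1 - p) := mul_nonneg hu0 h1p
      have h2 : 0 ≤ u false * l * p := mul_nonneg (mul_nonneg hu0 hl0) hp0
      have h3 : 0 ≤ u true * d * ((1 - p) * (1 - l)) :=
        mul_nonneg (mul_nonneg hu1 hd.le) (mul_nonneg h1p h1l)
      nlinarith
    have hu'1 : 0 ≤ u' true := by
      rw [hu't, huT]
      have h1 : 0 ≤ u false * p * (1 - l) := mul_nonneg (mul_nonneg hu0 hp0) h1l
      have h2 : 0 ≤ u true * d * p := mul_nonneg (mul_nonneg hu1 hd.le) hp0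
      have h3 : 0 ≤ u true * d * (l * (1 - p)) :=
        mul_nonneg (mul_nonneg hu1 hd.le) (mul_nonneg hl0 h1p)
      nlinarith
    have hC' : ∃ e' : ℝ, 0 ≤ e' ∧ (1 - p) * d * u' true - p * u' false = (d - 1) * e' := by
      refine ⟨(u false + d * u true) * (p * (1 - p) * (1 - l)) + l * (d * e + p * u false),
        ?_, ?_⟩
      · have h1 : 0 ≤ (u false + d * u true) * (p * (1 - p) * (1 - l)) :=
          mul_nonneg (add_nonneg hu0 (mul_nonneg hd.le hu1))
            (mul_nonneg (mul_nonneg hp0 h1p) h1l)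
        have h2 : 0 ≤ l * (d * e + p * u false) :=
          mul_nonneg hl0 (add_nonneg (mul_nonneg hd.le he0) (mul_nonneg hp0 hu0))
        linarith
      · rw [hu'f, hu't, huF, huT]
        linear_combination (l * d) * he
    calc ∑ i : Bool, u i * Wl p l d (a :: t) (gg d) i
        ≤ ∑ i : Bool, u i * Wl p l d (1 :: t) (gg d) i := step1
      _ = ∑ j : Bool, u' j * Wl p l d t (gg d) j := step2 t
      _ ≤ ∑ j : Bool, u' j * Wl p l d (List.replicate t.length 1) (gg d) j :=
          ih hge' u' hu'0 hu'1 hC'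
      _ = ∑ i : Bool, u i * Wl p l d (1 :: List.replicate t.length 1) (gg d) i :=
          (step2 _).symm
      _ = ∑ i : Bool, u i * Wl p l d (List.replicate (a :: t).length 1) (gg d) i := by
          simp [List.replicate_succ]
end inv

lemma pathfold (w0 : Bool → ℝ) (ws : ℕ → Bool → Bool → ℝ) :
    ∀ (t : ℕ) (G : Bool → ℝ),
    ∑ f : Fin (t + 1) → Bool,
      (w0 (f 0) * ∏ k : Fin t, ws k (f k.castSucc) (f k.succ)) * G (f (Fin.last t))
      = ∑ j : Bool, vfold w0 ws t j * G j := by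
  intro t
  induction t with
  | zero =>
    intro G
    rw [← (Equiv.funUnique (Fin 1) Bool).symm.sum_comp]
    simp [vfold]
  | succ t ih =>
    intro G
    rw [← (Fin.insertNthEquiv (fun _ => Bool) (Fin.last (t + 1))).sum_comp]
    rw [Fintype.sum_prod_type]
    have key : ∀ (c : Bool) (f : Fin (t + 1) → Bool),
        (w0 ((Fin.insertNthEquiv (fun _ => Bool) (Fin.last (t + 1))) (c, f) 0) *
          ∏ k : Fin (t + 1),
            ws k (((Fin.insertNthEquiv (fun _ => Bool) (Fin.last (t + 1))) (c, f)) k.castSucc)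
              (((Fin.insertNthEquiv (fun _ => Bool) (Fin.last (t + 1))) (c, f)) k.succ)) *
          G (((Fin.insertNthEquiv (fun _ => Bool) (Fin.last (t + 1))) (c, f)) (Fin.last (t+1)))
        = (w0 (f 0) * ∏ k : Fin t, ws k (f k.castSucc) (f k.succ)) *
            (ws t (f (Fin.last t)) c * G c) := by
      intro c f
      have hF : ∀ j : Fin (t + 1),
          (Fin.insertNthEquiv (fun _ => Bool) (Fin.last (t + 1))) (c, f) j.castSucc = f j := by
        intro j
        rw [show j.castSucc = (Fin.last (t+1)).succAbove j from (Fin.succAbove_last ▸ rfl)]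
        simp [Fin.insertNthEquiv]
      have hlast : (Fin.insertNthEquiv (fun _ => Bool) (Fin.last (t + 1))) (c, f)
          (Fin.last (t+1)) = c := by simp [Fin.insertNthEquiv]
      have h0 : (Fin.insertNthEquiv (fun _ => Bool) (Fin.last (t + 1))) (c, f) 0 = f 0 := by
        rw [show (0 : Fin (t+2)) = (0 : Fin (t+1)).castSucc from (Fin.castSucc_zero).symm, hF]
      rw [Fin.prod_univ_castSucc]
      have hprod : ∀ k : Fin t,
          ws k.castSucc ((Fin.insertNthEquiv (fun _ => Bool) (Fin.last (t + 1))) (c, f)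
              k.castSucc.castSucc)
            ((Fin.insertNthEquiv (fun _ => Bool) (Fin.last (t + 1))) (c, f) k.castSucc.succ)
          = ws k (f k.castSucc) (f k.succ) := by
        intro k
        rw [Fin.succ_castSucc, hF, hF]
        simp
      rw [Finset.prod_congr rfl fun k _ => hprod k, h0, hlast]
      rw [show ((Fin.last t).succ : Fin (t+2)) = Fin.last (t+1) from rfl, hlast, hF]
      simp
      ring
    rw [Finset.sum_comm]
    calc ∑ f : Fin (t+1) → Bool, ∑ c : Bool, _ = _ := by
          refine Finset.sum_congr rfl fun f _ => Finset.sum_congr rfl fun c _ => key c f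
      _ = ∑ f : Fin (t+1) → Bool, (w0 (f 0) * ∏ k : Fin t, ws k (f k.castSucc) (f k.succ)) *
            (∑ c : Bool, ws t (f (Fin.last t)) c * G c) := by
          refine Finset.sum_congr rfl fun f _ => ?_
          rw [Finset.mul_sum]
      _ = ∑ j : Bool, vfold w0 ws t j * (∑ c : Bool, ws t j c * G c) :=
          ih (fun i => ∑ c : Bool, ws t i c * G c)
      _ = ∑ j : Bool, vfold w0 ws (t+1) j * G j := by
          simp only [vfold, Finset.mul_sum, Finset.sum_mul]
          rw [Finset.sum_comm]
          refine Finset.sum_congr rfl fun j _ => Finset.sum_congr rfl fun c _ => by ring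

section collapse
variable (p l d : ℝ) (τ : ℕ → ℕ) (n : ℕ)

lemma prop1 (s : ℕ) : ∀ (a : ℕ), (∀ u, s < u → u ≤ s + a → u ∉ slots τ n) →
    ∀ j, vfold (w0v p d τ n) (wsv p l d τ n) (s + a) j
      = ∑ i : Bool, vfold (w0v p d τ n) (wsv p l d τ n) s i * qp p l a i j := by
  intro a
  induction a with
  | zero => intro _ j; rw [sum_qp_zero, Nat.add_zero]
  | succ b ih =>
    intro hns j
    have hb : ∀ u, s < u → u ≤ s + b → u ∉ slots τ n := fun u h1 h2 =>
      hns u h1 (by omega)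
    have hnot : s + b + 1 ∉ slots τ n := hns (s + b + 1) (by omega) (by omega)
    show ∑ i : Bool, vfold (w0v p d τ n) (wsv p l d τ n) (s + b) i * wsv p l d τ n (s + b) i j
      = _
    have hws : ∀ i, wsv p l d τ n (s + b) i j = qp p l 1 i j := by
      intro i; rw [wsv, if_neg hnot, mul_one]
    calc ∑ i : Bool, vfold (w0v p d τ n) (wsv p l d τ n) (s + b) i * wsv p l d τ n (s + b) i j
        = ∑ i : Bool, (∑ k : Bool, vfold (w0v p d τ n) (wsv p l d τ n) s k * qp p l b k i)
            * qp p l 1 i j := by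
          refine Finset.sum_congr rfl fun i _ => ?_; rw [hws, ih hb]
      _ = ∑ k : Bool, vfold (w0v p d τ n) (wsv p l d τ n) s k
            * ∑ i : Bool, qp p l b k i * qp p l 1 i j := by
          simp only [Fintype.sum_bool]; ring
      _ = ∑ i : Bool, vfold (w0v p d τ n) (wsv p l d τ n) s i * qp p l (b + 1) i j := by
          refine Finset.sum_congr rfl fun k _ => ?_; rw [chapman]

lemma prop2 (s a : ℕ) (ha : 1 ≤ a) (hin : s + a ∈ slots τ n)
    (hns : ∀ u, s < u → u < s + a → u ∉ slots τ n) :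
    ∀ j, vfold (w0v p d τ n) (wsv p l d τ n) (s + a) j
      = (∑ i : Bool, vfold (w0v p d τ n) (wsv p l d τ n) s i * qp p l a i j) * gg d j := by
  intro j
  obtain ⟨b, rfl⟩ : ∃ b, a = b + 1 := ⟨a - 1, by omega⟩
  have hb : ∀ u, s < u → u ≤ s + b → u ∉ slots τ n := fun u h1 h2 => hns u h1 (by omega)
  have heq : s + (b + 1) = (s + b) + 1 := by omega
  rw [heq]
  show ∑ i : Bool, vfold (w0v p d τ n) (wsv p l d τ n) (s + b) i * wsv p l d τ n (s + b) i j = _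
  have hws : ∀ i, wsv p l d τ n (s + b) i j = qp p l 1 i j * gg d j := by
    intro i; rw [wsv, if_pos (by rw [show s + b + 1 = s + (b+1) from by omega]; exact hin)]
  have hcha : ∀ k : Bool, ∑ i : Bool, qp p l b k i * qp p l 1 i j = qp p l (b + 1) k j :=
    fun k => chapman p l b 1 k j
  simp only [Fintype.sum_bool, hws, prop1 p l d τ n s b hb]
  rw [← hcha true, ← hcha false]
  simp only [Fintype.sum_bool]
  ring

lemma collapse (hτ : StrictMono τ) :
    ∀ m, m < n → ∀ j, vfold (w0v p d τ n) (wsv p l d τ n) (τ m) j = ffwd p l d τ m j := by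
  intro m
  induction m with
  | zero =>
    intro h0 j
    by_cases h : τ 0 = 0
    · have : (0:ℕ) ∈ slots τ n := Finset.mem_image.2 ⟨0, Finset.mem_range.2 h0, h⟩
      rw [h]
      show w0v p d τ n j = _
      rw [w0v, if_pos this]; rfl
    · have hpos : 1 ≤ τ 0 := by omega
      have h0s : (0:ℕ) ∉ slots τ n := by
        intro hc
        obtain ⟨r, _, hr⟩ := Finset.mem_image.1 hc
        have : τ 0 ≤ τ r := hτ.monotone (Nat.zero_le r)
        omega
      have hin : 0 + τ 0 ∈ slots τ n := by
        rw [Nat.zero_add]; exact Finset.mem_image.2 ⟨0, Finset.mem_range.2 h0, rfl⟩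
      have hns : ∀ u, 0 < u → u < 0 + τ 0 → u ∉ slots τ n := by
        intro u h1 h2 hc
        obtain ⟨r, _, hr⟩ := Finset.mem_image.1 hc
        have : τ 0 ≤ τ r := hτ.monotone (Nat.zero_le r)
        omega
      have := prop2 p l d τ n 0 (τ 0) hpos hin hns j
      rw [Nat.zero_add] at this
      rw [this]
      have hw0 : ∀ i, vfold (w0v p d τ n) (wsv p l d τ n) 0 i = pv p i := by
        intro i; show w0v p d τ n i = _; rw [w0v, if_neg h0s, mul_one]
      rw [show ∑ i : Bool, vfold (w0v p d τ n) (wsv p l d τ n) 0 i * qp p l (τ 0) i j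
          = ∑ i : Bool, pv p i * qp p l (τ 0) i j from
          Finset.sum_congr rfl fun i _ => by rw [hw0], stationary]
      rfl
  | succ m ih =>
    intro hm j
    have hmn : m < n := by omega
    have hlt : τ m < τ (m + 1) := hτ (by omega)
    have ha : 1 ≤ τ (m + 1) - τ m := by omega
    have hτm : τ (m + 1) = τ m + (τ (m + 1) - τ m) := by omega
    set a := τ (m + 1) - τ m
    have hin : τ m + a ∈ slots τ n :=
      Finset.mem_image.2 ⟨m + 1, Finset.mem_range.2 hm, by omega⟩
    have hns : ∀ u, τ m < u → u < τ m + a → u ∉ slots τ n := by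
      intro u h1 h2 hc
      obtain ⟨r, _, hr⟩ := Finset.mem_image.1 hc
      rcases Nat.lt_or_ge r (m + 1) with h | h
      · have : τ r ≤ τ m := hτ.monotone (by omega)
        omega
      · have : τ (m + 1) ≤ τ r := hτ.monotone h
        omega
    rw [hτm, prop2 p l d τ n (τ m) a ha hin hns j]
    show (∑ i : Bool, vfold (w0v p d τ n) (wsv p l d τ n) (τ m) i * qp p l a i j) * gg d j = _
    rw [show ∑ i : Bool, vfold (w0v p d τ n) (wsv p l d τ n) (τ m) i * qp p l a i j
        = ∑ i : Bool, ffwd p l d τ m i * qp p l a i j from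
        Finset.sum_congr rfl fun i _ => by rw [ih hmn]]
    rfl

lemma ffwd_W : ∀ (m : ℕ) (c : Bool → ℝ),
    ∑ j : Bool, ffwd p l d τ m j * c j
      = ∑ i : Bool, pv p i * Wl p l d (glist τ m) (fun x => gg d x * c x) i := by
  intro m
  induction m with
  | zero => intro c; simp [ffwd, glist, Wl]; ring
  | succ m ih =>
    intro c
    rw [show glist τ (m + 1) = glist τ m ++ [τ (m + 1) - τ m] from rfl, Wl_append]
    rw [← ih (fun x => ∑ j : Bool, qp p l (τ (m + 1) - τ m) x j * (gg d j * c j))]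
    show ∑ j : Bool, (∑ i : Bool, ffwd p l d τ m i * qp p l (τ (m + 1) - τ m) i j) * gg d j * c j
      = _
    simp only [Fintype.sum_bool]
    ring
end collapse

lemma glist_length (τ : ℕ → ℕ) : ∀ m, (glist τ m).length = m := by
  intro m
  induction m with
  | zero => rfl
  | succ m ih => simp [glist, ih]

lemma glist_ge_one (τ : ℕ → ℕ) (hτ : StrictMono τ) :
    ∀ m, ∀ a ∈ glist τ m, 1 ≤ a := by
  intro m
  induction m with
  | zero => intro a ha; simp [glist] at ha
  | succ m ih =>
    intro a ha
    rcases List.mem_append.1 ha with h | h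
    · exact ih a h
    · have : a = τ (m + 1) - τ m := by simpa using h
      have : τ m < τ (m + 1) := hτ (by omega)
      omega

lemma glist_id : ∀ m, glist (fun k => k) m = List.replicate m 1 := by
  intro m
  induction m with
  | zero => rfl
  | succ m ih => simp [glist, ih, List.replicate_succ']

lemma decomp {Ω : Type*} [MeasurableSpace Ω] (μ : Measure Ω) [IsProbabilityMeasure μ]
    (X : ℕ → Ω → Bool) (hmeas : ∀ k, Measurable (X k)) (t : ℕ)
    (F : (Fin (t + 1) → Bool) → ℝ) :
    ∫ ω, F (fun i => X i ω) ∂μ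
      = ∑ f : Fin (t + 1) → Bool,
          F f * (μ {ω | ∀ i : Fin (t + 1), X i ω = f i}).toReal := by
  have hA : ∀ f : Fin (t + 1) → Bool,
      MeasurableSet {ω | ∀ i : Fin (t + 1), X i ω = f i} := by
    intro f
    have : {ω | ∀ i : Fin (t + 1), X i ω = f i}
        = ⋂ i : Fin (t + 1), (X i) ⁻¹' {f i} := by
      ext ω; simp [Set.mem_iInter, Set.mem_preimage]
    rw [this]
    exact MeasurableSet.iInter fun i => (hmeas i) (measurableSet_singleton _)
  have hpt : (fun ω => F (fun i => X i ω))
      = fun ω => ∑ f : Fin (t + 1) → Bool,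
          Set.indicator {ω | ∀ i : Fin (t + 1), X i ω = f i} (fun _ => F f) ω := by
    funext ω
    rw [Finset.sum_eq_single (fun i : Fin (t+1) => X i ω)]
    · rw [Set.indicator_of_mem (by simp [Set.mem_setOf_eq])]
    · intro f _ hne
      rw [Set.indicator_of_notMem]
      intro hmem
      exact hne (funext fun i => (hmem i).symm)
    · intro h; exact absurd (Finset.mem_univ _) h
  rw [hpt, integral_finset_sum _ fun f _ =>
    (integrable_const (F f)).indicator (hA f)]
  refine Finset.sum_congr rfl fun f _ => ?_
  rw [integral_indicator_const _ (hA f)]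
  simp [mul_comm]
  exact Or.inl rfl

lemma pipeline {Ω : Type*} [MeasurableSpace Ω] (μ : Measure Ω) [IsProbabilityMeasure μ]
    (X : ℕ → Ω → Bool) (hmeas : ∀ k, Measurable (X k))
    (p l d θ P : ℝ) (hd : d = Real.exp (θ * P))
    (hpath' : ∀ (N : ℕ) (f : ℕ → Bool),
      (μ {ω | ∀ i ≤ N, X i ω = f i}).toReal
        = pv p (f 0) * ∏ i ∈ Finset.range N, qp p l 1 (f i) (f (i + 1)))
    (m : ℕ) (τ : ℕ → ℕ) (hτ : StrictMono τ) :
    ∫ ω, Real.exp (θ * (P * ∑ i ∈ Finset.range (m + 1), (if X (τ i) ω then (1 : ℝ) else 0))) ∂μ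
      = ∑ i : Bool, pv p i * Wl p l d (glist τ m) (gg d) i := by
  set t := τ m with ht
  set n' := m + 1 with hn'
  -- extension of a finite path to ℕ
  set fe : (Fin (t + 1) → Bool) → ℕ → Bool :=
    fun f k => if h : k < t + 1 then f ⟨k, h⟩ else false with hfe
  have fe_lt : ∀ (f : Fin (t + 1) → Bool) (k : ℕ) (h : k < t + 1), fe f k = f ⟨k, h⟩ :=
    fun f k h => dif_pos h
  have hτle : ∀ i, i < n' → τ i < t + 1 := by
    intro i hi
    have : τ i ≤ τ m := hτ.monotone (by omega)
    omega
  set F : (Fin (t + 1) → Bool) → ℝ :=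
    fun f => ∏ i ∈ Finset.range n', gg d (fe f (τ i)) with hF
  -- step 1 : the integrand only depends on the path up to time t
  have hint : (fun ω => Real.exp (θ * (P * ∑ i ∈ Finset.range n',
      (if X (τ i) ω then (1 : ℝ) else 0)))) = fun ω => F (fun i => X i ω) := by
    funext ω
    have h1 : θ * (P * ∑ i ∈ Finset.range n', (if X (τ i) ω then (1 : ℝ) else 0))
        = ∑ i ∈ Finset.range n', θ * (P * (if X (τ i) ω then (1 : ℝ) else 0)) := by
      rw [Finset.mul_sum, Finset.mul_sum]
    rw [h1, Real.exp_sum, hF]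
    refine Finset.prod_congr rfl fun i hi => ?_
    have hlt := hτle i (Finset.mem_range.1 hi)
    rw [fe_lt (fun i => X i ω) (τ i) hlt]
    cases hX : X (τ i) ω <;> simp [hX, gg, hd]
  -- step 2 : decompose the integral over paths
  rw [hint, decomp μ X hmeas t F]
  -- step 3 : identify the path probabilities
  have hAeq : ∀ f : Fin (t + 1) → Bool,
      {ω | ∀ i : Fin (t + 1), X i ω = f i} = {ω | ∀ i ≤ t, X i ω = fe f i} := by
    intro f
    ext ω
    constructor
    · intro h i hi
      rw [fe_lt f i (by omega)]
      exact h ⟨i, by omega⟩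
    · intro h i
      have := h i.val (by omega)
      rwa [fe_lt f i.val i.isLt, Fin.eta] at this
  have hmeasure : ∀ f : Fin (t + 1) → Bool,
      (μ {ω | ∀ i : Fin (t + 1), X i ω = f i}).toReal
        = pv p (f 0) * ∏ k : Fin t, qp p l 1 (f k.castSucc) (f k.succ) := by
    intro f
    rw [hAeq f, hpath' t (fe f)]
    have h0 : fe f 0 = f 0 := by rw [fe_lt f 0 (by omega), Fin.mk_zero]
    rw [h0]
    congr 1
    rw [← Fin.prod_univ_eq_prod_range (fun i => qp p l 1 (fe f i) (fe f (i + 1))) t]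
    refine Finset.prod_congr rfl fun k _ => ?_
    have hk1 : (k : ℕ) < t + 1 := by omega
    have hk2 : (k : ℕ) + 1 < t + 1 := by omega
    rw [fe_lt f k hk1, fe_lt f (k + 1) hk2]
    congr 1
  -- step 4 : rewrite the slot product in positional form
  have hslot : ∀ f : Fin (t + 1) → Bool,
      F f = (if 0 ∈ slots τ n' then gg d (f 0) else 1) *
        ∏ k : Fin t, (if (k : ℕ) + 1 ∈ slots τ n' then gg d (f k.succ) else 1) := by
    intro f
    have h1 : F f = ∏ u ∈ slots τ n', gg d (fe f u) := by
      rw [hF, slots, Finset.prod_image (fun x _ y _ h => hτ.injective h)]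
    have hfil : (Finset.range (t + 1)).filter (· ∈ slots τ n') = slots τ n' := by
      ext u
      simp only [Finset.mem_filter, Finset.mem_range]
      constructor
      · exact fun h => h.2
      · intro hu
        refine ⟨?_, hu⟩
        obtain ⟨r, hr, hru⟩ := Finset.mem_image.1 hu
        have := hτle r (Finset.mem_range.1 hr)
        omega
    calc F f = ∏ u ∈ slots τ n', gg d (fe f u) := h1
      _ = ∏ u ∈ (Finset.range (t + 1)).filter (· ∈ slots τ n'), gg d (fe f u) := by
          rw [hfil]
      _ = ∏ u ∈ Finset.range (t + 1), if u ∈ slots τ n' then gg d (fe f u) else 1 :=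
          Finset.prod_filter _ _
      _ = (∏ u ∈ Finset.range t, if u + 1 ∈ slots τ n' then gg d (fe f (u + 1)) else 1) *
          (if 0 ∈ slots τ n' then gg d (fe f 0) else 1) :=
          Finset.prod_range_succ' _ t
      _ = (if 0 ∈ slots τ n' then gg d (f 0) else 1) *
          ∏ k : Fin t, (if (k : ℕ) + 1 ∈ slots τ n' then gg d (f k.succ) else 1) := by
          rw [fe_lt f 0 (by omega), Fin.mk_zero, mul_comm]
          congr 1
          rw [← Fin.prod_univ_eq_prod_range
            (fun u => if u + 1 ∈ slots τ n' then gg d (fe f (u + 1)) else 1) t]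
          refine Finset.prod_congr rfl fun k _ => ?_
          have hk2 : (k : ℕ) + 1 < t + 1 := by omega
          rw [fe_lt f ((k : ℕ) + 1) hk2]
          rfl
  -- step 5 : the summand matches the generic fold
  have hterm : ∀ f : Fin (t + 1) → Bool,
      F f * (μ {ω | ∀ i : Fin (t + 1), X i ω = f i}).toReal
        = (w0v p d τ n' (f 0) *
            ∏ k : Fin t, wsv p l d τ n' k (f k.castSucc) (f k.succ)) *
          (fun _ : Bool => (1 : ℝ)) (f (Fin.last t)) := by
    intro f
    rw [hmeasure f, hslot f]
    have hws : ∏ k : Fin t, wsv p l d τ n' k (f k.castSucc) (f k.succ)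
        = (∏ k : Fin t, qp p l 1 (f k.castSucc) (f k.succ)) *
          ∏ k : Fin t, (if (k : ℕ) + 1 ∈ slots τ n' then gg d (f k.succ) else 1) := by
      rw [← Finset.prod_mul_distrib]
      rfl
    rw [hws, w0v]
    ring
  rw [Finset.sum_congr rfl fun f _ => hterm f]
  rw [pathfold (w0v p d τ n') (wsv p l d τ n') t (fun _ => (1 : ℝ))]
  -- step 6 : collapse the fold along the slots
  have hcol : ∀ j, vfold (w0v p d τ n') (wsv p l d τ n') t j = ffwd p l d τ m j := by
    intro j
    exact collapse p l d τ n' hτ m (by omega) j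
  rw [Finset.sum_congr rfl fun j _ => by rw [hcol j]]
  have := ffwd_W p l d τ m (fun _ => (1 : ℝ))
  rw [this]
  refine Finset.sum_congr rfl fun i _ => ?_
  congr 1
  have : (fun x => gg d x * (1 : ℝ)) = gg d := by funext x; rw [mul_one]
  rw [this]

end MMOO17

/-- gap monotonicity of the MMOO moment-generating function: for any θ and
any strictly increasing time slots τ_0 < τ_1 < …, E[e^{θP Σ_{i<n} X_{τ_i}}] ≤ E[e^{θ S(0,n)}],
i.e. the MGF over n time slots is maximized when the slots are consecutive. -/
theorem mmoo_mgf_gap_monotone {Ω : Type*} [MeasurableSpace Ω]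
    (μ : Measure Ω) [IsProbabilityMeasure μ]
    (X : ℕ → Ω → Bool) (hmeas : ∀ k, Measurable (X k))
    (p01 p10 : ℝ) (h01 : 0 < p01) (h10 : 0 < p10) (hsum : p01 + p10 < 1)
    (p : ℝ) (hp : p = p01 / (p01 + p10))
    (trans : Bool → Bool → ℝ)
    (htrans : trans = fun i j =>
      if i then (if j then 1 - p10 else p10) else (if j then p01 else 1 - p01))
    (hpath : ∀ (n : ℕ) (f : ℕ → Bool),
      (μ {ω | ∀ i ≤ n, X i ω = f i}).toReal
        = (if f 0 then p else 1 - p) * ∏ i ∈ Finset.range n, trans (f i) (f (i + 1)))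
    (P : ℝ) (hP : 0 < P) (θ : ℝ) :
    ∀ (n : ℕ) (τ : ℕ → ℕ), StrictMono τ →
      (∫ ω, Real.exp (θ * (P * ∑ i ∈ Finset.range n, (if X (τ i) ω then (1 : ℝ) else 0))) ∂μ)
        ≤ ∫ ω, Real.exp (θ * (P * ∑ k ∈ Finset.range n, (if X k ω then (1 : ℝ) else 0))) ∂μ := by
  intro n τ hτ
  rcases n with _ | m
  · simp
  · set l : ℝ := 1 - (p01 + p10) with hl
    set d : ℝ := Real.exp (θ * P) with hd
    have hs0 : (0:ℝ) < p01 + p10 := by linarith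
    have hp0 : 0 ≤ p := by rw [hp]; positivity
    have hp1 : p ≤ 1 := by rw [hp, div_le_one hs0]; linarith
    have hl0 : 0 ≤ l := by rw [hl]; linarith
    have hl1 : l ≤ 1 := by rw [hl]; linarith
    have hd0 : 0 < d := Real.exp_pos _
    have htq : ∀ i j, trans i j = MMOO17.qp p l 1 i j := by
      intro i j
      rw [htrans]
      cases i <;> cases j <;>
        simp [MMOO17.qp, MMOO17.pv, hp, hl] <;> field_simp <;> ring
    have hpath' : ∀ (N : ℕ) (f : ℕ → Bool),
        (μ {ω | ∀ i ≤ N, X i ω = f i}).toReal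
          = MMOO17.pv p (f 0) * ∏ i ∈ Finset.range N, MMOO17.qp p l 1 (f i) (f (i + 1)) := by
      intro N f
      rw [hpath N f]
      exact congrArg₂ (· * ·) rfl (Finset.prod_congr rfl fun i _ => htq _ _)
    have hL := MMOO17.pipeline μ X hmeas p l d θ P hd hpath' m τ hτ
    have hid : StrictMono (fun k : ℕ => k) := fun a b h => h
    have hR := MMOO17.pipeline μ X hmeas p l d θ P hd hpath' m (fun k => k) hid
    rw [hL, hR]
    have hge := MMOO17.glist_ge_one τ hτ m
    have hCpv : ∃ e : ℝ, 0 ≤ e ∧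
        (1 - p) * d * MMOO17.pv p true - p * MMOO17.pv p false = (d - 1) * e := by
      refine ⟨p * (1 - p), mul_nonneg hp0 (by linarith), ?_⟩
      simp [MMOO17.pv]
      ring
    have hmono := MMOO17.Wl_mono hp0 hp1 hl0 hl1 hd0 (MMOO17.glist τ m) hge
      (MMOO17.pv p) (by simp [MMOO17.pv]; linarith) (by simp [MMOO17.pv]; linarith) hCpv
    rw [MMOO17.glist_length τ m, ← MMOO17.glist_id m] at hmono
    exact hmono
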